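/- Let G be a finite connected simple graph with n ≥ 5 vertices. Then 4·i(G)·χ(G) ≤ n², where i(G) is the independent domination number of G and χ(G) is the chromatic number of G. -/
import Mathlib


/-- `D` is a dominating set of `G`. -/
def IsDomSet {V : Type*} (G : SimpleGraph V) (D : Finset V) : Prop :=
  ∀ v ∉ D, ∃ d ∈ D, G.Adj v d

/-- The independent domination number of `G`: the minimum size of a dominating set
that is also an independent set. -/
noncomputable def indepDomNum (V : Type*) [Fintype V] (G : SimpleGraph V) : ℕ :=
  sInf {n | ∃ D : Finset V, IsDomSet G D ∧ (∀ u ∈ D, ∀ v ∈ D, ¬ G.Adj u v) ∧ D.card = n}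

/-- The chromatic number of `G` (as a natural number). -/
noncomputable def chromNum {V : Type*} (G : SimpleGraph V) : ℕ :=
  sInf {n | G.Colorable n}

/-- Every graph on a fintype has a maximal independent set, which is dominating. -/
lemma exists_indep_dom {V : Type*} [Fintype V] (G : SimpleGraph V) :
    ∃ D : Finset V, IsDomSet G D ∧ (∀ u ∈ D, ∀ v ∈ D, ¬ G.Adj u v) := by
  classical
  let T : Finset (Finset V) :=
    Finset.univ.filter (fun D => ∀ u ∈ D, ∀ v ∈ D, ¬ G.Adj u v)
  have hne : T.Nonempty := ⟨∅, by simp [T]⟩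
  obtain ⟨D, hDT, hmax⟩ := T.exists_max_image Finset.card hne
  have hDind : ∀ u ∈ D, ∀ v ∈ D, ¬ G.Adj u v := by
    simpa [T] using hDT
  refine ⟨D, ?_, hDind⟩
  intro v hv
  by_contra hno
  push_neg at hno
  have hins : insert v D ∈ T := by
    simp only [T, Finset.mem_filter, Finset.mem_univ, true_and]
    intro a ha b hb
    simp only [Finset.mem_insert] at ha hb
    rcases ha with rfl | ha <;> rcases hb with rfl | hb
    · exact G.irrefl
    · exact fun h => hno b hb h
    · exact fun h => hno a ha h.symm
    · exact hDind a ha b hb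
  have := hmax _ hins
  rw [Finset.card_insert_of_notMem hv] at this
  omega

lemma exists_neighbor {V : Type*} [Fintype V] {G : SimpleGraph V}
    (hconn : G.Connected) (hcard : 2 ≤ Fintype.card V) (u : V) : ∃ w, G.Adj u w := by
  have : Nontrivial V := Fintype.one_lt_card_iff_nontrivial.mp (by omega)
  obtain ⟨x, hx⟩ := exists_ne u
  obtain ⟨p⟩ := hconn.preconnected u x
  have hnil : ¬ p.Nil := SimpleGraph.Walk.not_nil_of_ne (Ne.symm hx)
  rw [SimpleGraph.Walk.not_nil_iff] at hnil
  obtain ⟨w, h, -⟩ := hnil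
  exact ⟨w, h⟩

theorem stmt_18 {V : Type*} [Fintype V] (G : SimpleGraph V)
    (hconn : G.Connected) (hcard : 5 ≤ Fintype.card V) :
    4 * indepDomNum V G * chromNum G ≤ Fintype.card V ^ 2 := by
  classical
  set n := Fintype.card V with hn
  -- the minimum independent dominating set
  have hSne : {m | ∃ D : Finset V, IsDomSet G D ∧ (∀ u ∈ D, ∀ v ∈ D, ¬ G.Adj u v) ∧
      D.card = m}.Nonempty := by
    obtain ⟨D, h1, h2⟩ := exists_indep_dom G
    exact ⟨D.card, D, h1, h2, rfl⟩
  obtain ⟨D, hdom, hind, hDcard⟩ : ∃ D : Finset V, IsDomSet G D ∧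
      (∀ u ∈ D, ∀ v ∈ D, ¬ G.Adj u v) ∧ D.card = indepDomNum V G :=
    Nat.sInf_mem hSne
  set i := indepDomNum V G with hi
  set χ := chromNum G with hχdef
  have hile : i ≤ n := hDcard ▸ D.card_le_univ
  -- G has an edge, so D ≠ univ, so i ≤ n - 1
  have hedge : ∃ a b, G.Adj a b := by
    obtain ⟨a⟩ : Nonempty V := Fintype.card_pos_iff.mp (by omega)
    obtain ⟨b, hb⟩ := exists_neighbor hconn (by omega) a
    exact ⟨a, b, hb⟩
  have hilt : i + 1 ≤ n := by
    obtain ⟨a, b, hab⟩ := hedge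
    have hDne : D ≠ Finset.univ := by
      intro h
      exact hind a (h ▸ Finset.mem_univ a) b (h ▸ Finset.mem_univ b) hab
    have : D ⊂ Finset.univ := ⟨D.subset_univ, fun h => hDne
      (Finset.Subset.antisymm D.subset_univ h)⟩
    have := Finset.card_lt_card this
    rw [Finset.card_univ] at this
    omega
  -- chromatic number bounds
  have hcol_le : ∀ m, G.Colorable m → χ ≤ m := fun m hm => Nat.sInf_le hm
  have hχn : χ ≤ n := hcol_le n G.selfColoring.colorable
  have hcompl : Fintype.card {v : V // v ∉ D} = n - i := by
    rw [Fintype.card_subtype_compl, hn]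
    congr 1
    simpa using hDcard
  -- main claim: if i ≥ 2 then χ + i ≤ n
  have key : 2 ≤ i → χ + i ≤ n := by
    intro hige
    by_contra h
    push_neg at h
    have hχge : n - i + 1 ≤ χ := by omega
    -- Claim A: the complement of D is a clique
    have hclique : ∀ x, x ∉ D → ∀ y, y ∉ D → x ≠ y → G.Adj x y := by
      intro x hx y hy hxy
      by_contra hnadj
      -- color with n - i colors
      have hycard : Fintype.card (Option {v : V // v ∉ insert y D}) = n - i := by
        rw [Fintype.card_option, Fintype.card_subtype_compl]
        have h2 : Fintype.card {v : V // v ∈ insert y D} = i + 1 := by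
          rw [Fintype.card_coe, Finset.card_insert_of_notMem hy, hDcard]
        rw [h2, ← hn]
        omega
      have hxmem : x ∉ insert y D := by simp [hx, hxy]
      let c : V → Option {v : V // v ∉ insert y D} := fun v =>
        if h : v ∈ D then none
        else if hvy : v = y then some ⟨x, hxmem⟩
        else some ⟨v, by simp [h, hvy]⟩
      have hcol : G.Colorable (n - i) := by
        rw [← hycard]
        refine (SimpleGraph.Coloring.mk c ?_).colorable
        intro a b hab
        by_cases ha : a ∈ D
        · by_cases hb : b ∈ D
          · exact absurd hab (hind a ha b hb)
          · simp only [c, dif_pos ha, dif_neg hb]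
            split <;> simp
        · by_cases hb : b ∈ D
          · simp only [c, dif_neg ha, dif_pos hb]
            split <;> simp
          · simp only [c, dif_neg ha, dif_neg hb]
            rcases eq_or_ne a y with hay | hay <;> rcases eq_or_ne b y with hby | hby
            · exact absurd (hay.trans hby.symm) hab.ne
            · rw [dif_pos hay, dif_neg hby]
              simp only [ne_eq, Option.some_inj, Subtype.mk.injEq]
              intro hxb
              subst hay
              exact hnadj (by rw [hxb]; exact hab.symm)
            · rw [dif_neg hay, dif_pos hby]
              simp only [ne_eq, Option.some_inj, Subtype.mk.injEq]
              intro hax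
              subst hby
              exact hnadj (by rw [← hax]; exact hab)
            · rw [dif_neg hay, dif_neg hby]
              simpa using hab.ne
      have := hcol_le _ hcol
      omega
    -- Claim B: some vertex of D is adjacent to everything outside D
    have hdomin : ∃ v ∈ D, ∀ w, w ∉ D → G.Adj v w := by
      by_contra hB
      push_neg at hB
      -- every v ∈ D misses some vertex outside D; color with n - i colors
      choose f hf1 hf2 using hB
      have hDne : D.Nonempty := by
        rcases Finset.eq_empty_or_nonempty D with rfl | h
        · obtain ⟨a⟩ : Nonempty V := Fintype.card_pos_iff.mp (by omega)
          obtain ⟨d, hd, -⟩ := hdom a (by simp)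
          exact absurd hd (by simp)
        · exact h
      let c : V → {v : V // v ∉ D} := fun v =>
        if h : v ∈ D then ⟨f v h, hf1 v h⟩ else ⟨v, h⟩
      have hcol : G.Colorable (n - i) := by
        rw [← hcompl]
        refine (SimpleGraph.Coloring.mk c ?_).colorable
        intro a b hab
        by_cases ha : a ∈ D
        · by_cases hb : b ∈ D
          · exact absurd hab (hind a ha b hb)
          · simp only [c, dif_pos ha, dif_neg hb, ne_eq, Subtype.mk.injEq]
            intro h
            exact hf2 a ha (h ▸ hab)
        · by_cases hb : b ∈ D
          · simp only [c, dif_neg ha, dif_pos hb, ne_eq, Subtype.mk.injEq]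
            intro h
            exact hf2 b hb (h ▸ hab.symm)
          · simp only [c, dif_neg ha, dif_neg hb, ne_eq, Subtype.mk.injEq]
            exact hab.ne
      have := hcol_le _ hcol
      omega
    obtain ⟨v, hvD, hvall⟩ := hdomin
    obtain ⟨u, huD, huv⟩ : ∃ u ∈ D, u ≠ v :=
      Finset.exists_mem_ne (by omega : 1 < D.card) v
    obtain ⟨w, hw⟩ := exists_neighbor hconn (by omega) u
    have hwD : w ∉ D := fun hwD => hind u huD w hwD hw
    -- the smaller set
    set D' := insert w (D.filter (fun x => ¬ G.Adj x w)) with hD'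
    have hwD' : w ∉ D.filter (fun x => ¬ G.Adj x w) := fun h =>
      hwD (Finset.mem_filter.mp h).1
    have hsub : D.filter (fun x => ¬ G.Adj x w) ⊆ D \ {v, u} := by
      intro x hx
      rw [Finset.mem_filter] at hx
      rw [Finset.mem_sdiff]
      refine ⟨hx.1, ?_⟩
      simp only [Finset.mem_insert, Finset.mem_singleton]
      rintro (rfl | rfl)
      · exact hx.2 (hvall w hwD)
      · exact hx.2 hw
    have hcard' : D'.card ≤ i - 1 := by
      rw [hD', Finset.card_insert_of_notMem hwD']
      have h1 : (D \ {v, u}).card = i - 2 := by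
        rw [Finset.card_sdiff_of_subset (by
          intro x hx
          simp only [Finset.mem_insert, Finset.mem_singleton] at hx
          rcases hx with rfl | rfl
          · exact hvD
          · exact huD)]
        rw [hDcard]
        congr 1
        rw [Finset.card_insert_of_notMem (by simpa using Ne.symm huv), Finset.card_singleton]
      have := Finset.card_le_card hsub
      omega
    have hD'ind : ∀ a ∈ D', ∀ b ∈ D', ¬ G.Adj a b := by
      intro a ha b hb
      rw [hD', Finset.mem_insert] at ha hb
      rcases ha with rfl | ha <;> rcases hb with rfl | hb
      · exact G.irrefl
      · exact fun h => (Finset.mem_filter.mp hb).2 h.symm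
      · exact (Finset.mem_filter.mp ha).2
      · exact hind a (Finset.mem_filter.mp ha).1 b (Finset.mem_filter.mp hb).1
    have hD'dom : IsDomSet G D' := by
      intro z hz
      rw [hD', Finset.mem_insert] at hz
      push_neg at hz
      refine ⟨w, by simp [hD'], ?_⟩
      by_cases hzD : z ∈ D
      · by_contra hnz
        exact hz.2 (Finset.mem_filter.mpr ⟨hzD, hnz⟩)
      · exact hclique z hzD w hwD hz.1
    have : i ≤ D'.card := Nat.sInf_le ⟨D', hD'dom, hD'ind, rfl⟩
    omega
  -- now finish
  by_cases h1 : i ≤ 1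
  · nlinarith [hχn, hcard]
  · have key2 : χ + i ≤ n := key (by omega)
    nlinarith [Nat.pow_le_pow_left key2 2, two_mul_le_add_sq χ i]
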